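/- Let k, k₁, k₂ > 0, and fix a sequence S⃗ of k subsets of M. For j ∈ {1,2}, let μ_j be the uniform distribution over sequences S⃗_j of k_j subsets of M whose joint atom-size vector with S⃗ equals a fixed vector a⃗_j ∈ ℤ^{2^{k+k_j}}. Let a⃗ ∈ ℤ^{2^{k+k₁+k₂}} be such that under independent draws S⃗₁ ~ μ₁, S⃗₂ ~ μ₂, the event E = {atom-size vector of S⃗ ∥ S⃗₁ ∥ S⃗₂ equals a⃗} has positive probability. Then for each j and every fixed sequence Z⃗, Pr_{S⃗_j ~ μ_j}(S⃗_j = Z⃗) = Pr(S⃗_j = Z⃗ | E) under the independent joint draw. In other words, conditioning on the joint atom-size vector does not change the marginal distribution of either coordinate. -/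

import Mathlib

open Finset

/-- The atom-size vector of a finite sequence `V` of subsets of `[m]`:
`partVec V b = |{z : ∀ i, 1[z ∈ V i] = b i}|`. -/
def partVec {m : ℕ} {ι : Type*} [Fintype ι] (V : ι → Finset (Fin m)) (b : ι → Bool) : ℕ :=
  (Finset.univ.filter (fun z : Fin m => ∀ i, (z ∈ V i ↔ b i = true))).card

/-- If two maps on a fintype have fibers of equal cardinalities, they are related by a
permutation of the domain. -/
lemma exists_perm_of_fiber_card {α β : Type*} [Fintype α] [DecidableEq α] [DecidableEq β]
    (f g : α → β)
    (h : ∀ b, (univ.filter (fun x => f x = b)).card = (univ.filter (fun x => g x = b)).card) :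
    ∃ e : Equiv.Perm α, ∀ x, g (e x) = f x := by
  have hcard : ∀ b : β, Fintype.card {x // f x = b} = Fintype.card {x // g x = b} := by
    intro b
    simpa [Fintype.card_subtype] using h b
  refine ⟨(Equiv.sigmaFiberEquiv f).symm.trans
    ((Equiv.sigmaCongrRight fun b => Fintype.equivOfCardEq (hcard b)).trans
      (Equiv.sigmaFiberEquiv g)), fun x => ?_⟩
  exact ((Fintype.equivOfCardEq (hcard (f x))) ⟨x, rfl⟩).2

/-- The membership-pattern map. -/
def patt {m : ℕ} {ι : Type*} (V : ι → Finset (Fin m)) (z : Fin m) : ι → Bool :=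
  fun i => decide (z ∈ V i)

lemma partVec_eq_card {m : ℕ} {ι : Type*} [Fintype ι] (V : ι → Finset (Fin m)) (b : ι → Bool) :
    partVec V b = (univ.filter (fun z => patt V z = b)).card := by
  unfold partVec patt
  congr 1
  ext z
  simp only [mem_filter, mem_univ, true_and, funext_iff, decide_eq_true_eq]
  refine forall_congr' fun i => ?_
  cases hb : b i <;> simp

/-- `partVec` is invariant under a permutation matching the membership patterns. -/
lemma partVec_perm {m : ℕ} {ι : Type*} [Fintype ι] (π : Equiv.Perm (Fin m))
    (V V' : ι → Finset (Fin m)) (h : ∀ z i, π z ∈ V' i ↔ z ∈ V i) :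
    partVec V' = partVec V := by
  funext b
  unfold partVec
  have : (univ.filter (fun z => ∀ i, (z ∈ V' i ↔ b i = true)))
      = (univ.filter (fun z => ∀ i, (z ∈ V i ↔ b i = true))).image π := by
    ext x
    simp only [mem_image, mem_filter, mem_univ, true_and]
    constructor
    · intro hx
      refine ⟨π.symm x, fun i => ?_, by simp⟩
      rw [← h (π.symm x) i]
      simpa using hx i
    · rintro ⟨y, hy, rfl⟩
      intro i
      rw [h y i]
      exact hy i
  rw [this, Finset.card_image_of_injective _ π.injective]

lemma count_le_1 {m k k1 k2 : ℕ} (S : Fin k → Finset (Fin m))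
    (a2 : (Fin k ⊕ Fin k2 → Bool) → ℕ) (a : (Fin k ⊕ (Fin k1 ⊕ Fin k2) → Bool) → ℕ)
    (z z' : Fin k1 → Finset (Fin m)) (π : Equiv.Perm (Fin m))
    (hπ : ∀ (x : Fin m) (i : Fin k ⊕ Fin k1), π x ∈ Sum.elim S z' i ↔ x ∈ Sum.elim S z i) :
    (((univ.filter (fun W : Fin k2 → Finset (Fin m) => partVec (Sum.elim S W) = a2)).filter
        (fun W => partVec (Sum.elim S (Sum.elim z W)) = a)).card)
    ≤ (((univ.filter (fun W : Fin k2 → Finset (Fin m) => partVec (Sum.elim S W) = a2)).filter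
        (fun W => partVec (Sum.elim S (Sum.elim z' W)) = a)).card) := by
  apply Finset.card_le_card_of_injOn (fun W i => (W i).map π.toEmbedding)
  · intro W hW
    simp only [mem_coe, mem_filter, mem_univ, true_and] at hW ⊢
    obtain ⟨h1, h2⟩ := hW
    constructor
    · rw [partVec_perm π (Sum.elim S W) (Sum.elim S (fun i => (W i).map π.toEmbedding)) ?_]
      · exact h1
      · intro x i
        cases i with
        | inl i => exact hπ x (Sum.inl i)
        | inr i => simp
    · rw [partVec_perm π (Sum.elim S (Sum.elim z W))
        (Sum.elim S (Sum.elim z' (fun i => (W i).map π.toEmbedding))) ?_]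
      · exact h2
      · intro x i
        rcases i with i | i | i
        · exact hπ x (Sum.inl i)
        · exact hπ x (Sum.inr i)
        · simp
  · intro W _ W' _ h
    funext i
    exact Finset.map_injective _ (congrFun h i)

lemma count_le_2 {m k k1 k2 : ℕ} (S : Fin k → Finset (Fin m))
    (a1 : (Fin k ⊕ Fin k1 → Bool) → ℕ) (a : (Fin k ⊕ (Fin k1 ⊕ Fin k2) → Bool) → ℕ)
    (w w' : Fin k2 → Finset (Fin m)) (π : Equiv.Perm (Fin m))
    (hπ : ∀ (x : Fin m) (i : Fin k ⊕ Fin k2), π x ∈ Sum.elim S w' i ↔ x ∈ Sum.elim S w i) :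
    (((univ.filter (fun V : Fin k1 → Finset (Fin m) => partVec (Sum.elim S V) = a1)).filter
        (fun V => partVec (Sum.elim S (Sum.elim V w)) = a)).card)
    ≤ (((univ.filter (fun V : Fin k1 → Finset (Fin m) => partVec (Sum.elim S V) = a1)).filter
        (fun V => partVec (Sum.elim S (Sum.elim V w')) = a)).card) := by
  apply Finset.card_le_card_of_injOn (fun V i => (V i).map π.toEmbedding)
  · intro V hV
    simp only [mem_coe, mem_filter, mem_univ, true_and] at hV ⊢
    obtain ⟨h1, h2⟩ := hV
    constructor
    · rw [partVec_perm π (Sum.elim S V) (Sum.elim S (fun i => (V i).map π.toEmbedding)) ?_]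
      · exact h1
      · intro x i
        cases i with
        | inl i => exact hπ x (Sum.inl i)
        | inr i => simp
    · rw [partVec_perm π (Sum.elim S (Sum.elim V w))
        (Sum.elim S (Sum.elim (fun i => (V i).map π.toEmbedding) w')) ?_]
      · exact h2
      · intro x i
        rcases i with i | i | i
        · exact hπ x (Sum.inl i)
        · simp
        · exact hπ x (Sum.inr i)
  · intro V _ V' _ h
    funext i
    exact Finset.map_injective _ (congrFun h i)

/-- The marginal-equals-conditional-marginal computation for the first coordinate of a
product measure conditioned on an event whose fibers over the first coordinate have
constant size. -/
lemma half {α β : Type*} [DecidableEq α] [DecidableEq β]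
    (C1 : Finset α) (C2 : Finset β) (P : α → β → Prop) [∀ a b, Decidable (P a b)]
    (E : Finset (α × β)) (hE : ∀ p : α × β, p ∈ E ↔ p.1 ∈ C1 ∧ p.2 ∈ C2 ∧ P p.1 p.2)
    (hconst : ∀ z ∈ C1, ∀ z' ∈ C1,
      (C2.filter (fun w => P z w)).card = (C2.filter (fun w => P z' w)).card)
    (hne : E.Nonempty) (Z : α) :
    ((C1.filter (fun W => W = Z)).card : ℝ) / (C1.card : ℝ)
      = ((E.filter (fun W => W.1 = Z)).card : ℝ) / (E.card : ℝ) := by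
  obtain ⟨⟨z0, w0⟩, h0⟩ := hne
  rw [hE] at h0
  obtain ⟨hz0, hw0, hP0⟩ := h0
  set N := (C2.filter (fun w => P z0 w)).card with hN
  have hNpos : 0 < N := Finset.card_pos.2 ⟨w0, mem_filter.mpr ⟨hw0, hP0⟩⟩
  have hfiber : ∀ z ∈ C1, (E.filter (fun W => W.1 = z)).card
      = (C2.filter (fun w => P z w)).card := by
    intro z hz
    refine Finset.card_bij' (fun p _ => p.2) (fun w _ => (z, w)) ?_ ?_ ?_ ?_
    · intro p hp
      rw [mem_filter, hE] at hp
      obtain ⟨⟨_, h2, h3⟩, h4⟩ := hp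
      exact mem_filter.mpr ⟨h2, h4 ▸ h3⟩
    · intro w hw
      rw [mem_filter] at hw
      rw [mem_filter, hE]
      exact ⟨⟨hz, hw.1, hw.2⟩, rfl⟩
    · intro p hp
      rw [mem_filter] at hp
      exact Prod.ext hp.2.symm rfl
    · intro w _; rfl
  have hEcard : E.card = C1.card * N := by
    have h1 : E.card = ∑ z ∈ C1, (E.filter (fun W => W.1 = z)).card := by
      apply Finset.card_eq_sum_card_fiberwise
      intro p hp
      exact ((hE p).1 hp).1
    rw [h1, Finset.sum_congr rfl (fun z hz => by
      rw [hfiber z hz, hconst z hz z0 hz0])]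
    simp [mul_comm, hN]
  by_cases hZ : Z ∈ C1
  · have hL : (C1.filter (fun W => W = Z)).card = 1 := by
      rw [Finset.filter_eq', if_pos hZ, Finset.card_singleton]
    have hR : (E.filter (fun W => W.1 = Z)).card = N := by
      rw [hfiber Z hZ, hconst Z hZ z0 hz0]
    rw [hL, hR, hEcard]
    have hc1 : (0:ℝ) < C1.card := by
      exact_mod_cast Finset.card_pos.2 ⟨Z, hZ⟩
    have hn : (0:ℝ) < N := by exact_mod_cast hNpos
    rw [Nat.cast_mul]
    field_simp
    norm_num
  · have hL : (C1.filter (fun W => W = Z)) = ∅ := by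
      rw [Finset.filter_eq', if_neg hZ]
    have hR : (E.filter (fun W => W.1 = Z)) = ∅ := by
      rw [Finset.filter_eq_empty_iff]
      intro p hp
      intro h
      exact hZ (h ▸ ((hE p).1 hp).1)
    rw [hL, hR]
    simp

/-- Conditioning on the joint atom-size vector does not change the marginal distribution
of either coordinate: for `j ∈ {1,2}` and every `Z⃗`,
`Pr_{S⃗_j ~ μ_j}(S⃗_j = Z⃗) = Pr(S⃗_j = Z⃗ | joint atom-size vector = a⃗)`. -/
theorem marginal_eq_conditional_marginal (m k k1 k2 : ℕ)
    (hk : 0 < k) (hk1 : 0 < k1) (hk2 : 0 < k2)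
    (S : Fin k → Finset (Fin m))
    (a1 : (Fin k ⊕ Fin k1 → Bool) → ℕ)
    (a2 : (Fin k ⊕ Fin k2 → Bool) → ℕ)
    (a : (Fin k ⊕ (Fin k1 ⊕ Fin k2) → Bool) → ℕ)
    (C1 : Finset (Fin k1 → Finset (Fin m)))
    (C2 : Finset (Fin k2 → Finset (Fin m)))
    -- `μ_1` is uniform over `C1`, the sequences whose joint atom-size vector with `S⃗`
    -- is `a⃗_1`, and similarly for `μ_2`:
    (hC1 : C1 = Finset.univ.filter
      (fun W : Fin k1 → Finset (Fin m) => partVec (Sum.elim S W) = a1))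
    (hC2 : C2 = Finset.univ.filter
      (fun W : Fin k2 → Finset (Fin m) => partVec (Sum.elim S W) = a2))
    (E : Finset ((Fin k1 → Finset (Fin m)) × (Fin k2 → Finset (Fin m))))
    -- `E` is the event that the atom-size vector of `S⃗ ∥ S⃗₁ ∥ S⃗₂` equals `a⃗`,
    -- under the independent draw `S⃗₁ ~ μ₁`, `S⃗₂ ~ μ₂`:
    (hE : E = (C1 ×ˢ C2).filter
      (fun W => partVec (Sum.elim S (Sum.elim W.1 W.2)) = a))
    -- this event has positive probability:
    (hEpos : E.Nonempty) :
    (∀ Z : Fin k1 → Finset (Fin m),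
      ((C1.filter (fun W => W = Z)).card : ℝ) / (C1.card : ℝ)
        = ((E.filter (fun W => W.1 = Z)).card : ℝ) / (E.card : ℝ))
    ∧ (∀ Z : Fin k2 → Finset (Fin m),
      ((C2.filter (fun W => W = Z)).card : ℝ) / (C2.card : ℝ)
        = ((E.filter (fun W => W.2 = Z)).card : ℝ) / (E.card : ℝ)) := by
  -- extract permutations between fibers
  have hperm1 : ∀ z ∈ C1, ∀ z' ∈ C1, ∃ π : Equiv.Perm (Fin m),
      ∀ (x : Fin m) (i : Fin k ⊕ Fin k1),
        π x ∈ Sum.elim S z' i ↔ x ∈ Sum.elim S z i := by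
    intro z hz z' hz'
    rw [hC1, mem_filter] at hz hz'
    obtain ⟨π, hπ⟩ := exists_perm_of_fiber_card
      (patt (Sum.elim S z)) (patt (Sum.elim S z'))
      (fun b => by rw [← partVec_eq_card, ← partVec_eq_card, hz.2, hz'.2])
    refine ⟨π, fun x i => ?_⟩
    have := congrFun (hπ x) i
    simpa [patt, decide_eq_decide] using this
  have hperm2 : ∀ w ∈ C2, ∀ w' ∈ C2, ∃ π : Equiv.Perm (Fin m),
      ∀ (x : Fin m) (i : Fin k ⊕ Fin k2),
        π x ∈ Sum.elim S w' i ↔ x ∈ Sum.elim S w i := by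
    intro w hw w' hw'
    rw [hC2, mem_filter] at hw hw'
    obtain ⟨π, hπ⟩ := exists_perm_of_fiber_card
      (patt (Sum.elim S w)) (patt (Sum.elim S w'))
      (fun b => by rw [← partVec_eq_card, ← partVec_eq_card, hw.2, hw'.2])
    refine ⟨π, fun x i => ?_⟩
    have := congrFun (hπ x) i
    simpa [patt, decide_eq_decide] using this
  have hconst1 : ∀ z ∈ C1, ∀ z' ∈ C1,
      (C2.filter (fun w => partVec (Sum.elim S (Sum.elim z w)) = a)).card
      = (C2.filter (fun w => partVec (Sum.elim S (Sum.elim z' w)) = a)).card := by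
    intro z hz z' hz'
    obtain ⟨π, hπ⟩ := hperm1 z hz z' hz'
    obtain ⟨π', hπ'⟩ := hperm1 z' hz' z hz
    rw [hC2]
    exact le_antisymm (count_le_1 S a2 a z z' π hπ) (count_le_1 S a2 a z' z π' hπ')
  have hconst2 : ∀ w ∈ C2, ∀ w' ∈ C2,
      (C1.filter (fun z => partVec (Sum.elim S (Sum.elim z w)) = a)).card
      = (C1.filter (fun z => partVec (Sum.elim S (Sum.elim z w')) = a)).card := by
    intro w hw w' hw'
    obtain ⟨π, hπ⟩ := hperm2 w hw w' hw'
    obtain ⟨π', hπ'⟩ := hperm2 w' hw' w hw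
    rw [hC1]
    exact le_antisymm (count_le_2 S a1 a w w' π hπ) (count_le_2 S a1 a w' w π' hπ')
  constructor
  · intro Z
    refine half C1 C2 (fun z w => partVec (Sum.elim S (Sum.elim z w)) = a) E ?_ hconst1 hEpos Z
    intro p
    rw [hE, mem_filter, mem_product, and_assoc]
  · intro Z
    -- swap the product
    set E2 : Finset ((Fin k2 → Finset (Fin m)) × (Fin k1 → Finset (Fin m)))
      := E.image Prod.swap with hE2def
    have hE2 : ∀ p : (Fin k2 → Finset (Fin m)) × (Fin k1 → Finset (Fin m)),
        p ∈ E2 ↔ p.1 ∈ C2 ∧ p.2 ∈ C1 ∧ partVec (Sum.elim S (Sum.elim p.2 p.1)) = a := by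
      intro p
      simp only [hE2def, mem_image, hE, mem_filter, mem_product]
      constructor
      · rintro ⟨q, ⟨⟨h1, h2⟩, h3⟩, rfl⟩
        exact ⟨h2, h1, h3⟩
      · rintro ⟨h1, h2, h3⟩
        exact ⟨p.swap, ⟨⟨h2, h1⟩, h3⟩, by simp⟩
    have hne2 : E2.Nonempty := by
      obtain ⟨p, hp⟩ := hEpos
      exact ⟨p.swap, mem_image_of_mem _ hp⟩
    have := half C2 C1 (fun w z => partVec (Sum.elim S (Sum.elim z w)) = a) E2 hE2 hconst2 hne2 Z
    rw [this]
    have hcard : E2.card = E.card :=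
      Finset.card_image_of_injective _ Prod.swap_injective
    have hfilt : (E2.filter (fun W => W.1 = Z)).card
        = (E.filter (fun W => W.2 = Z)).card := by
      have : E2.filter (fun W => W.1 = Z)
          = (E.filter (fun W => W.2 = Z)).image Prod.swap := by
        ext p
        simp only [hE2def, mem_filter, mem_image]
        constructor
        · rintro ⟨⟨q, hq, rfl⟩, h⟩
          exact ⟨q, ⟨hq, h⟩, rfl⟩
        · rintro ⟨q, ⟨hq, h⟩, rfl⟩
          exact ⟨⟨q, hq, rfl⟩, h⟩
      rw [this, Finset.card_image_of_injective _ Prod.swap_injective]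
    rw [hcard, hfilt]
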